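/- arXiv:0909.0304 — 2 statements merged into one kernel-verified Lean document; each statement's English description precedes it below -/
import Mathlib

section
/- Let 𝔉 = 𝔉(X) be the free profinite group on a finite set X with |X| > 1. Then 𝔉 has trivial center. -/
set_option linter.unusedVariables false

namespace CSP

/-! ### The profinite completion of a discrete group -/

/-- The index set for the profinite completion: finite-index normal subgroups. -/
abbrev FinQuot (G : Type*) [Group G] : Type _ :=
  {N : Subgroup G // N.Normal ∧ N.FiniteIndex}

variable (G : Type*) [Group G]

instance (N : FinQuot G) : (N.1).Normal := N.2.1

instance (N : FinQuot G) : TopologicalSpace (G ⧸ N.1) := ⊥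

instance (N : FinQuot G) : DiscreteTopology (G ⧸ N.1) := ⟨rfl⟩

instance (N : FinQuot G) : IsTopologicalGroup (G ⧸ N.1) where
  continuous_mul := continuous_of_discreteTopology
  continuous_inv := continuous_of_discreteTopology

/-- The diagonal homomorphism from `G` into the product of all of its finite quotients. -/
def toFinQuots : G →* (∀ N : FinQuot G, G ⧸ N.1) :=
  Pi.monoidHom fun N => QuotientGroup.mk' N.1

/-- The profinite completion of `G` as a subgroup of the product of the finite
quotients of `G`: the closure of the image of the diagonal map. -/
def profSubgroup : Subgroup (∀ N : FinQuot G, G ⧸ N.1) :=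
  (toFinQuots G).range.topologicalClosure

/-- The profinite completion of a (discrete) group `G`, as a topological group.
For `G = F(X)` a free group on a finite set `X`, this is the free profinite group
`𝔉(X)` on `X`. -/
abbrev ProfComp : Type _ := ↥(profSubgroup G)

/-- The canonical homomorphism from `G` to its profinite completion.  For a free
group this is the embedding of `F(X)` into the free profinite group `𝔉(X)`. -/
def unit : G →* ProfComp G :=
  (toFinQuots G).codRestrict _ fun g =>
    Subgroup.le_topologicalClosure _ (MonoidHom.mem_range.2 ⟨g, rfl⟩)

/-! ### Auxiliary material for the proof -/

open Multiplicative

variable {G}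

/-- Compatibility of the coordinates of an element of the profinite completion. -/
theorem coord_compat (w : ProfComp G) (M N : FinQuot G) (h : M.1 ≤ N.1) :
    QuotientGroup.map M.1 N.1 (MonoidHom.id G) h (w.1 M) = w.1 N := by
  have hw : w.1 ∈ closure ((toFinQuots G).range : Set (∀ N : FinQuot G, G ⧸ N.1)) := w.2
  have hclosed : IsClosed {f : ∀ N : FinQuot G, G ⧸ N.1 |
      QuotientGroup.map M.1 N.1 (MonoidHom.id G) h (f M) = f N} :=
    isClosed_eq ((continuous_of_discreteTopology).comp (continuous_apply M))
      (continuous_apply N)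
  have hsub : ((toFinQuots G).range : Set (∀ N : FinQuot G, G ⧸ N.1)) ⊆
      {f | QuotientGroup.map M.1 N.1 (MonoidHom.id G) h (f M) = f N} := by
    rintro _ ⟨g, rfl⟩
    show QuotientGroup.map M.1 N.1 (MonoidHom.id G) h (QuotientGroup.mk g)
        = (QuotientGroup.mk g : G ⧸ N.1)
    rfl
  exact closure_minimal hsub hclosed hw

section Core

/-- The coefficient module: functions from `H` to `ZMod 2`, written multiplicatively. -/
abbrev Vmod (H : Type*) : Type _ := H → Multiplicative (ZMod 2)

variable {H : Type*} [Group H] [DecidableEq H]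

/-- Indicator function of a point. -/
def delta (q : H) : Vmod H := fun w => if w = q then ofAdd 1 else 1

/-- The left translation action of `H` on `Vmod H`. -/
def act : H →* MulAut (Vmod H) where
  toFun q :=
    { toFun := fun f w => f (q⁻¹ * w)
      invFun := fun f w => f (q * w)
      left_inv := fun f => by funext w; simp
      right_inv := fun f => by funext w; simp
      map_mul' := fun f g => rfl }
  map_one' := by
    ext f w
    simp
  map_mul' a b := by
    ext f w
    simp [mul_assoc]

theorem act_apply (q : H) (f : Vmod H) (w : H) : act q f w = f (q⁻¹ * w) := rfl

theorem act_delta (q w : H) : act q (delta w) = delta (q * w) := by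
  funext u
  simp only [act_apply, delta]
  by_cases h : u = q * w
  · rw [if_pos (by rw [h]; group), if_pos h]
  · rw [if_neg, if_neg h]
    intro hc
    exact h (by rw [← hc]; group)

theorem vmod_inv (f : Vmod H) : f⁻¹ = f := by
  funext w
  show (f w)⁻¹ = f w
  have : ∀ t : Multiplicative (ZMod 2), t⁻¹ = t := by decide
  exact this _

/-- The key combinatorial lemma: in the semidirect product `Vmod H ⋊ H`, if an
element `⟨v, z⟩` commutes with `⟨δ₁, a⟩` and `⟨δ₁, b⟩`, where `ε a = 1`, `ε b = 0`
for a character `ε` to `ZMod r`, and `a ^ r = 1`, then `z = 1`. -/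
theorem core_right_eq_one [Finite H] (r : ℕ) (hr : r ≠ 0)
    (a b : H) (ε : H →* Multiplicative (ZMod r))
    (hεa : ε a = ofAdd 1) (hεb : ε b = 1) (har : a ^ r = 1)
    (v : Vmod H) (z : H)
    (hx : v * act z (delta 1) = delta 1 * act a v)
    (hy : v * act z (delta 1) = delta 1 * act b v) :
    z = 1 := by
  classical
  haveI : NeZero r := ⟨hr⟩
  haveI : Fintype H := Fintype.ofFinite H
  have hzd : act z (delta 1) = delta z := by rw [act_delta, mul_one]
  rw [hzd] at hx hy
  set u : Vmod H := delta z * delta 1 with hu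
  have hav : act a v = v * u := by
    have h1 : act a v = (delta 1)⁻¹ * (v * delta z) := by rw [hx]; group
    rw [h1, vmod_inv, hu, mul_comm (delta 1) (v * delta z), mul_assoc]
  have hbv : act b v = v * u := by
    have h1 : act b v = (delta 1)⁻¹ * (v * delta z) := by rw [hy]; group
    rw [h1, vmod_inv, hu, mul_comm (delta 1) (v * delta z), mul_assoc]
  -- telescoping
  have key : ∀ i : ℕ, act (a ^ i) v = v * ∏ j ∈ Finset.range i, act (a ^ j) u := by
    intro i
    induction i with
    | zero => simp
    | succ i ih =>
      rw [pow_succ, map_mul, MulAut.mul_apply, hav, map_mul, ih, Finset.prod_range_succ,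
        ← mul_assoc]
  set m := orderOf a with hm
  have hmpos : 0 < m := orderOf_pos a
  have hP : ∏ j ∈ Finset.range m, act (a ^ j) u = 1 := by
    have h1 := key m
    rw [hm, pow_orderOf_eq_one, map_one, MulAut.one_apply] at h1
    exact left_eq_mul.mp h1
  -- evaluate at z
  have hPz : ∑ j ∈ Finset.range m,
      ((if a ^ j = 1 then (1 : ZMod 2) else 0) + (if z = a ^ j then (1 : ZMod 2) else 0)) = 0 := by
    have h2 := congrFun hP z
    rw [Finset.prod_apply] at h2
    have h3 : ∀ j ∈ Finset.range m, (act (a ^ j) u) z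
        = ofAdd ((if a ^ j = 1 then (1 : ZMod 2) else 0)
          + (if z = a ^ j then (1 : ZMod 2) else 0)) := by
      intro j _
      have h4 : act (a ^ j) u = delta (a ^ j * z) * delta (a ^ j) := by
        rw [hu, map_mul, act_delta, act_delta, mul_one]
      rw [h4]
      show delta (a ^ j * z) z * delta (a ^ j) z = _
      simp only [delta]
      have hc : (z = a ^ j * z) ↔ (a ^ j = 1) := right_eq_mul
      have e1 : (if z = a ^ j * z then (ofAdd (1 : ZMod 2)) else 1)
          = ofAdd (if a ^ j = 1 then (1 : ZMod 2) else 0) := by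
        by_cases hcc : a ^ j = 1
        · rw [if_pos (hc.mpr hcc), if_pos hcc]
        · rw [if_neg (fun hh => hcc (hc.mp hh)), if_neg hcc]; rfl
      have e2 : (if z = a ^ j then (ofAdd (1 : ZMod 2)) else 1)
          = ofAdd (if z = a ^ j then (1 : ZMod 2) else 0) := by
        by_cases hcc : z = a ^ j
        · rw [if_pos hcc, if_pos hcc]
        · rw [if_neg hcc, if_neg hcc]; rfl
      rw [ofAdd_add, ← e1, ← e2]
    rw [Finset.prod_congr rfl h3, ← ofAdd_sum] at h2
    exact ofAdd_eq_one.mp h2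
  rw [Finset.sum_add_distrib] at hPz
  have hfirst : ∑ j ∈ Finset.range m, (if a ^ j = 1 then (1 : ZMod 2) else 0) = 1 := by
    have hcongr : ∀ j ∈ Finset.range m, (if a ^ j = 1 then (1 : ZMod 2) else 0)
        = if j = 0 then 1 else 0 := by
      intro j hj
      rw [Finset.mem_range] at hj
      by_cases h0 : j = 0
      · subst h0; simp
      · rw [if_neg h0, if_neg]
        intro hone
        exact h0 (Nat.eq_zero_of_dvd_of_lt (orderOf_dvd_of_pow_eq_one hone) hj)
    rw [Finset.sum_congr rfl hcongr, Finset.sum_ite_eq' (Finset.range m) 0 (fun _ => (1 : ZMod 2)),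
      if_pos (Finset.mem_range.mpr hmpos)]
  rw [hfirst] at hPz
  have hsecond : ∑ j ∈ Finset.range m, (if z = a ^ j then (1 : ZMod 2) else 0) = 1 := by
    have h5 : ∀ t : ZMod 2, 1 + t = 0 → t = 1 := by decide
    exact h5 _ hPz
  have hex : ∃ j, j < m ∧ z = a ^ j := by
    by_contra hne
    push_neg at hne
    have : ∑ j ∈ Finset.range m, (if z = a ^ j then (1 : ZMod 2) else 0) = 0 := by
      apply Finset.sum_eq_zero
      intro j hj
      rw [if_neg (hne j (Finset.mem_range.mp hj))]
    rw [this] at hsecond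
    exact zero_ne_one hsecond
  obtain ⟨j, hjm, hja⟩ := hex
  -- Step B: show ε z = 1 using the commutation with b
  have hεz : ε z = 1 := by
    set S : Finset H := Finset.univ.filter fun w => ε w = ε z with hS
    have hzS : z ∈ S := by simp [hS]
    have hbS : ∀ w : H, w ∈ S → b⁻¹ * w ∈ S := by
      intro w hw
      simp only [hS, Finset.mem_filter, Finset.mem_univ, true_and] at hw ⊢
      rw [map_mul, map_inv, hεb, inv_one, one_mul, hw]
    have hbS' : ∀ w : H, w ∈ S → b * w ∈ S := by
      intro w hw
      simp only [hS, Finset.mem_filter, Finset.mem_univ, true_and] at hw ⊢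
      rw [map_mul, hw]
      have : ε b = 1 := hεb
      rw [this, one_mul]
    -- product of the relation act b v = v * u over S
    have hprod : ∏ w ∈ S, (act b v) w = ∏ w ∈ S, (v * u) w := by rw [hbv]
    have hlhs : ∏ w ∈ S, (act b v) w = ∏ w ∈ S, v w := by
      have : ∀ w ∈ S, (act b v) w = v (b⁻¹ * w) := fun w _ => rfl
      rw [Finset.prod_congr rfl this]
      refine Finset.prod_bij' (fun w _ => b⁻¹ * w) (fun w _ => b * w)
        (fun w hw => hbS w hw) (fun w hw => hbS' w hw) ?_ ?_ ?_
      · intro w hw; group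
      · intro w hw; group
      · intro w hw; rfl
    have hrhs : ∏ w ∈ S, (v * u) w = (∏ w ∈ S, v w) * ∏ w ∈ S, u w := by
      rw [← Finset.prod_mul_distrib]
      rfl
    have huprod : ∏ w ∈ S, u w = 1 := by
      have h6 : (∏ w ∈ S, v w) = (∏ w ∈ S, v w) * ∏ w ∈ S, u w := by
        rw [← hrhs, ← hprod, hlhs]
      exact (left_eq_mul.mp h6)
    -- compute the product of u over S
    have hup : ∏ w ∈ S, u w
        = (if z ∈ S then (ofAdd (1 : ZMod 2)) else 1) * (if (1 : H) ∈ S then ofAdd 1 else 1) := by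
      have : ∀ w ∈ S, u w = (if w = z then ofAdd (1 : ZMod 2) else 1)
          * (if w = (1 : H) then ofAdd 1 else 1) := by
        intro w _
        show delta z w * delta 1 w = _
        rfl
      rw [Finset.prod_congr rfl this, Finset.prod_mul_distrib,
        Finset.prod_ite_eq' S z (fun _ => ofAdd (1 : ZMod 2)),
        Finset.prod_ite_eq' S (1 : H) (fun _ => ofAdd (1 : ZMod 2))]
    rw [huprod, if_pos hzS] at hup
    by_cases h1S : (1 : H) ∈ S
    · simp only [hS, Finset.mem_filter, Finset.mem_univ, true_and] at h1S
      rw [← h1S, map_one]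
    · rw [if_neg h1S, mul_one] at hup
      exfalso
      have : (ofAdd (1 : ZMod 2)) ≠ 1 := by decide
      exact this hup.symm
  -- conclude
  have hdvd : r ∣ j := by
    have h7 : ε z = ofAdd ((j : ZMod r)) := by
      rw [hja, map_pow, hεa, ← ofAdd_nsmul]
      congr 1
      rw [nsmul_eq_mul, mul_one]
    rw [hεz] at h7
    have h8 : ((j : ZMod r)) = 0 := by
      have := ofAdd_eq_one.mp h7.symm
      exact this
    exact (ZMod.natCast_eq_zero_iff j r).mp h8
  have hmr : m ≤ r := Nat.le_of_dvd (Nat.pos_of_ne_zero hr) (orderOf_dvd_of_pow_eq_one har)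
  have hj0 : j = 0 := Nat.eq_zero_of_dvd_of_lt hdvd (lt_of_lt_of_le hjm hmr)
  rw [hja, hj0, pow_zero]

end Core

/-- Corollary 2.3 (second part): the free profinite group `𝔉(X)` on a finite set
`X` with `|X| > 1` has trivial center. -/
theorem freeProfinite_center_trivial (X : Type) [Finite X] (hX : 1 < Nat.card X) :
    Subgroup.center (ProfComp (FreeGroup X)) = ⊥ := by
  classical
  rw [Subgroup.eq_bot_iff_forall]
  intro z hz
  -- commutation of the coordinates of z with the images of group elements
  have hzc : ∀ (g : FreeGroup X) (N : FinQuot (FreeGroup X)),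
      z.1 N * (QuotientGroup.mk g : FreeGroup X ⧸ N.1)
        = (QuotientGroup.mk g : FreeGroup X ⧸ N.1) * z.1 N := by
    intro g N
    have h1 : z * unit (FreeGroup X) g = unit (FreeGroup X) g * z :=
      (Subgroup.mem_center_iff.mp hz (unit (FreeGroup X) g)).symm
    have h2 := congrArg (fun t => (t : ProfComp (FreeGroup X)).1 N) h1
    exact h2
  -- it suffices to show that every coordinate of z is 1
  refine Subtype.ext (funext fun N => ?_)
  show z.1 N = 1
  -- setup
  haveI : N.1.FiniteIndex := N.2.2
  set Q := FreeGroup X ⧸ N.1 with hQ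
  haveI : Finite Q := Subgroup.finite_quotient_of_finiteIndex
  set r := Monoid.exponent Q with hrdef
  have hr : r ≠ 0 := Monoid.exponent_ne_zero_of_finite
  haveI : NeZero r := ⟨hr⟩
  haveI : Nontrivial X := (Finite.one_lt_card_iff_nontrivial).mp hX
  obtain ⟨x, y, hxy⟩ := exists_pair_ne X
  set Q' := Q × Multiplicative (ZMod r) × Multiplicative (ZMod r) with hQ'
  haveI : DecidableEq Q' := Classical.decEq _
  -- the homomorphism into the auxiliary finite group
  set gen : X → Vmod Q' ⋊[act] Q' := fun t =>
    ⟨delta 1, ((QuotientGroup.mk (FreeGroup.of t) : Q),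
      ofAdd (if t = x then 1 else 0), ofAdd (if t = y then 1 else 0))⟩ with hgen
  set ψ : FreeGroup X →* Vmod Q' ⋊[act] Q' := FreeGroup.lift gen with hψ
  haveI hGfin : Finite (Vmod Q' ⋊[act] Q') := by
    apply Finite.of_injective (fun g : Vmod Q' ⋊[act] Q' => (g.left, g.right))
    intro g1 g2 h12
    rw [Prod.mk.injEq] at h12
    exact SemidirectProduct.ext h12.1 h12.2
  haveI : Finite ψ.range := Subtype.finite
  haveI : ψ.ker.FiniteIndex := Subgroup.finiteIndex_ker ψ
  set M : FinQuot (FreeGroup X) := ⟨ψ.ker, MonoidHom.normal_ker ψ, inferInstance⟩ with hM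
  -- the right component composed with ψ recovers the quotient maps
  have hcomp : ∀ g : FreeGroup X, ((ψ g).right).1 = (QuotientGroup.mk g : Q) := by
    have hhom : ((MonoidHom.fst Q _).comp
        ((SemidirectProduct.rightHom).comp ψ)) = QuotientGroup.mk' N.1 := by
      apply FreeGroup.ext_hom
      intro t
      simp only [MonoidHom.comp_apply, hψ, FreeGroup.lift_apply_of, hgen]
      rfl
    intro g
    exact DFunLike.congr_fun hhom g
  have hMN : M.1 ≤ N.1 := by
    intro g hg
    have hg1 : ψ g = 1 := hg
    have := hcomp g
    rw [hg1] at this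
    exact (QuotientGroup.eq_one_iff g).mp this.symm
  -- pick a representative of the coordinate of z at M
  obtain ⟨h, hh⟩ := QuotientGroup.mk'_surjective M.1 (z.1 M)
  -- ψ h commutes with the generators
  have hcomm : ∀ g : FreeGroup X, ψ h * ψ g = ψ g * ψ h := by
    intro g
    have h1 := hzc g M
    rw [← hh] at h1
    have h2 : (QuotientGroup.mk (h * g) : FreeGroup X ⧸ M.1) = QuotientGroup.mk (g * h) := by
      rw [QuotientGroup.mk_mul, QuotientGroup.mk_mul]
      exact h1
    have h3 : (h * g)⁻¹ * (g * h) ∈ ψ.ker := QuotientGroup.eq.mp h2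
    have h4 : ψ ((h * g)⁻¹ * (g * h)) = 1 := h3
    rw [map_mul, map_inv] at h4
    have h5 : ψ (h * g) = ψ (g * h) := by
      have := mul_eq_one_iff_eq_inv.mp h4
      rw [← inv_inv (ψ (g * h)), ← this, inv_inv]
    rw [map_mul, map_mul] at h5
    exact h5
  have hcx : ψ h * gen x = gen x * ψ h := by
    have := hcomm (FreeGroup.of x)
    rwa [hψ, FreeGroup.lift_apply_of] at this
  have hcy : ψ h * gen y = gen y * ψ h := by
    have := hcomm (FreeGroup.of y)
    rwa [hψ, FreeGroup.lift_apply_of] at this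
  -- extract the component equations
  set c := ψ h with hc
  set qx : Q' := (gen x).right with hqx
  set qy : Q' := (gen y).right with hqy
  have hgenxl : (gen x).left = delta 1 := rfl
  have hgenyl : (gen y).left = delta 1 := rfl
  have hEx : c.left * act c.right (delta 1) = delta 1 * act qx c.left := by
    have := congrArg SemidirectProduct.left hcx
    simpa [SemidirectProduct.mul_left, hgenxl, hqx] using this
  have hEy : c.left * act c.right (delta 1) = delta 1 * act qy c.left := by
    have := congrArg SemidirectProduct.left hcy
    simpa [SemidirectProduct.mul_left, hgenyl, hqy] using this
  have hExr : c.right * qx = qx * c.right := by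
    have := congrArg SemidirectProduct.right hcx
    simpa [SemidirectProduct.mul_right, hqx] using this
  -- the character ε
  set ε : Q' →* Multiplicative (ZMod r) :=
    (MonoidHom.fst (Multiplicative (ZMod r)) (Multiplicative (ZMod r))).comp
      (MonoidHom.snd Q (Multiplicative (ZMod r) × Multiplicative (ZMod r))) with hε
  have hεa : ε qx = ofAdd 1 := by
    show ofAdd (if x = x then (1 : ZMod r) else 0) = ofAdd 1
    rw [if_pos rfl]
  have hεb : ε qy = 1 := by
    show ofAdd (if y = x then (1 : ZMod r) else 0) = 1
    rw [if_neg (Ne.symm hxy)]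
    rfl
  have har : qx ^ r = 1 := by
    have h1 : ((QuotientGroup.mk (FreeGroup.of x) : Q)) ^ r = 1 :=
      Monoid.pow_exponent_eq_one _
    have h2 : ∀ cc : ZMod r, (ofAdd cc) ^ r = 1 := by
      intro cc
      rw [← ofAdd_nsmul]
      have : r • cc = 0 := by
        rw [nsmul_eq_mul]
        rw [ZMod.natCast_self, zero_mul]
      rw [this]
      rfl
    have h3 : qx ^ r = (qx.1 ^ r, qx.2.1 ^ r, qx.2.2 ^ r) := rfl
    have h4 : qx.1 = (QuotientGroup.mk (FreeGroup.of x) : Q) := rfl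
    rw [h3, h4, h1, h2, h2]
    rfl
  -- apply the core lemma
  have hz1 : c.right = 1 :=
    core_right_eq_one r hr qx qy ε hεa hεb har c.left c.right hEx hEy
  -- conclude: h maps to 1 in Q
  have hQ1 : (QuotientGroup.mk h : Q) = 1 := by
    rw [← hcomp h, ← hc, hz1]
    rfl
  have hhN : h ∈ N.1 := (QuotientGroup.eq_one_iff h).mp hQ1
  -- transfer along the compatibility of coordinates
  have hcc := coord_compat z M N hMN
  rw [← hh] at hcc
  have hmap : QuotientGroup.map M.1 N.1 (MonoidHom.id (FreeGroup X)) hMN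
      ((QuotientGroup.mk' M.1) h) = (QuotientGroup.mk h : FreeGroup X ⧸ N.1) :=
    rfl
  rw [hmap] at hcc
  rw [← hcc]
  exact (QuotientGroup.eq_one_iff h).mpr hhN

end CSP
end

section
/- Let Ψ = ⟨z₁⟩ * ⟨z₂⟩ * ⟨z₃⟩ be the free product of three cyclic groups of order 2, let α̇, β̇ ∈ Aut Ψ be the automorphisms defined by α̇(z₁) = (z₁z₂)⁻¹ z₁ (z₁z₂), α̇(z₂) = (z₁z₂)⁻¹ z₂ (z₁z₂), α̇(z₃) = (z₁z₂)⁻² z₃ (z₁z₂)² and β̇(z₁) = z₁, β̇(z₂) = (z₂z₃)⁻¹ z₂ (z₂z₃), β̇(z₃) = (z₂z₃)⁻¹ z₃ (z₂z₃), and set u = z₁z₂z₃, v = z₂z₃z₁, w = z₃z₁z₂. Then α̇(u) = w⁻¹uw, α̇(v) = v, α̇(w) = (uw)⁻¹w(uw), and β̇(u) = u, β̇(v) = v, β̇(w) = (vu)⁻¹w(vu). -/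
set_option linter.unusedVariables false

namespace CSP

/-- The free product `Ψ = ⟨z₁⟩ * ⟨z₂⟩ * ⟨z₃⟩` of three cyclic groups of order two. -/
abbrev Psi : Type := Monoid.CoprodI (fun _ : Fin 3 => Multiplicative (ZMod 2))

/-- The generator `zᵢ` of the `i`-th free factor of `Ψ`. -/
def z (i : Fin 3) : Psi :=
  Monoid.CoprodI.of (i := i) (Multiplicative.ofAdd (1 : ZMod 2))

/-- The element `u = z₁z₂z₃` of `Ψ`. -/
def u : Psi := z 0 * z 1 * z 2

/-- The element `v = z₂z₃z₁` of `Ψ`. -/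
def v : Psi := z 1 * z 2 * z 0

/-- The element `w = z₃z₁z₂` of `Ψ`. -/
def w : Psi := z 2 * z 0 * z 1

lemma z_sq (i : Fin 3) : z i * z i = 1 := by
  have h : (Multiplicative.ofAdd (1 : ZMod 2)) * Multiplicative.ofAdd 1 = 1 := by decide
  rw [z, ← map_mul, h, map_one]

lemma z_inv (i : Fin 3) : (z i)⁻¹ = z i :=
  inv_eq_of_mul_eq_one_right (z_sq i)

lemma z_cancel (i : Fin 3) (x : Psi) : z i * (z i * x) = x := by
  rw [← mul_assoc, z_sq, one_mul]

/-- Lemma 4.3: for the automorphisms `α̇`, `β̇` of `Ψ` defined by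
`α̇(z₁) = (z₁z₂)⁻¹z₁(z₁z₂)`, `α̇(z₂) = (z₁z₂)⁻¹z₂(z₁z₂)`, `α̇(z₃) = (z₁z₂)⁻²z₃(z₁z₂)²`,
`β̇(z₁) = z₁`, `β̇(z₂) = (z₂z₃)⁻¹z₂(z₂z₃)`, `β̇(z₃) = (z₂z₃)⁻¹z₃(z₂z₃)`,
and for `u = z₁z₂z₃`, `v = z₂z₃z₁`, `w = z₃z₁z₂`, one has
`α̇(u) = w⁻¹uw`, `α̇(v) = v`, `α̇(w) = (uw)⁻¹w(uw)` and
`β̇(u) = u`, `β̇(v) = v`, `β̇(w) = (vu)⁻¹w(vu)`. -/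
theorem adot_bdot_on_uvw (adot bdot : Psi ≃* Psi)
    (ha1 : adot (z 0) = (z 0 * z 1)⁻¹ * z 0 * (z 0 * z 1))
    (ha2 : adot (z 1) = (z 0 * z 1)⁻¹ * z 1 * (z 0 * z 1))
    (ha3 : adot (z 2) = ((z 0 * z 1) ^ 2)⁻¹ * z 2 * (z 0 * z 1) ^ 2)
    (hb1 : bdot (z 0) = z 0)
    (hb2 : bdot (z 1) = (z 1 * z 2)⁻¹ * z 1 * (z 1 * z 2))
    (hb3 : bdot (z 2) = (z 1 * z 2)⁻¹ * z 2 * (z 1 * z 2)) :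
    adot u = w⁻¹ * u * w ∧
    adot v = v ∧
    adot w = (u * w)⁻¹ * w * (u * w) ∧
    bdot u = u ∧
    bdot v = v ∧
    bdot w = (v * u)⁻¹ * w * (v * u) := by
  refine ⟨?_, ?_, ?_, ?_, ?_, ?_⟩ <;>
    simp only [u, v, w, map_mul, ha1, ha2, ha3, hb1, hb2, hb3, mul_inv_rev, z_inv, pow_two,
      mul_assoc, z_cancel, z_sq, mul_one]

end CSP
end
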